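/- For orthonormal vectors u, v, w in ℝ⁸ (the octonions), the Cayley 4-form Ψ satisfies Ψ(u, v, w, u×v×w) = 1; i.e., the 4-plane spanned by u, v, w, u×v×w is a Cayley 4-plane calibrated by Ψ. -/

import Mathlib

noncomputable section

/-- The octonions `𝕆 ≅ ℝ⁸`, realized as pairs of quaternions via Cayley–Dickson. -/
abbrev Octonion : Type := Quaternion ℝ × Quaternion ℝ

/-- Octonion multiplication (Cayley–Dickson doubling of the quaternions). -/
def omul (p q : Octonion) : Octonion :=
  (p.1 * q.1 - star q.2 * p.2, q.2 * p.1 + p.2 * star q.1)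

/-- Octonion conjugation. -/
def oconj (p : Octonion) : Octonion := (star p.1, -p.2)

/-- The standard inner product on the octonions `≅ ℝ⁸`. -/
def oinner (p q : Octonion) : ℝ := (p.1 * star q.1).re + (p.2 * star q.2).re

/-- The triple cross product `u×v×w = ½(u(v̄w) − w(v̄u))`. -/
def tcross (u v w : Octonion) : Octonion :=
  (2 : ℝ)⁻¹ • (omul u (omul (oconj v) w) - omul w (omul (oconj v) u))

/-- The Cayley 4-form `Ψ(u,v,w,z) = ⟨u×v×w, z⟩`. -/
def cayleyΨ (u v w z : Octonion) : ℝ := oinner (tcross u v w) z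

lemma oinner_expand (p q : Octonion) : oinner p q =
    p.1.re*q.1.re + p.1.imI*q.1.imI + p.1.imJ*q.1.imJ + p.1.imK*q.1.imK
    + p.2.re*q.2.re + p.2.imI*q.2.imI + p.2.imJ*q.2.imJ + p.2.imK*q.2.imK := by
  simp [oinner, Quaternion.re_mul, Quaternion.re_star, Quaternion.imI_star,
    Quaternion.imJ_star, Quaternion.imK_star]
  ring

lemma oinner_polar (a b c d : Octonion) :
    oinner (omul a b) (omul c d) + oinner (omul a d) (omul c b)
      = 2 * oinner a c * oinner b d := by
  simp only [oinner_expand, omul, Quaternion.re_mul, Quaternion.imI_mul,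
    Quaternion.imJ_mul, Quaternion.imK_mul, Quaternion.re_sub, Quaternion.imI_sub,
    Quaternion.imJ_sub, Quaternion.imK_sub, Quaternion.re_add, Quaternion.imI_add,
    Quaternion.imJ_add, Quaternion.imK_add, Quaternion.re_star, Quaternion.imI_star,
    Quaternion.imJ_star, Quaternion.imK_star]
  ring

lemma omul_sandwich (x v : Octonion) :
    omul x (omul (oconj v) x) = (2 * oinner x v) • x - (oinner x x) • v := by
  have h1 : (omul x (omul (oconj v) x)).1 = ((2 * oinner x v) • x - (oinner x x) • v).1 := by
    apply Quaternion.ext <;>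
    · simp only [oinner_expand, omul, oconj, Prod.fst_sub, Prod.snd_sub, Prod.smul_fst,
        Prod.smul_snd, Quaternion.re_mul, Quaternion.imI_mul, Quaternion.imJ_mul,
        Quaternion.imK_mul, Quaternion.re_sub, Quaternion.imI_sub, Quaternion.imJ_sub,
        Quaternion.imK_sub, Quaternion.re_add, Quaternion.imI_add, Quaternion.imJ_add,
        Quaternion.imK_add, Quaternion.re_star, Quaternion.imI_star, Quaternion.imJ_star,
        Quaternion.imK_star, Quaternion.re_neg, Quaternion.imI_neg, Quaternion.imJ_neg,
        Quaternion.imK_neg, Quaternion.re_smul, Quaternion.imI_smul, Quaternion.imJ_smul,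
        Quaternion.imK_smul, smul_eq_mul]
      ring
  have h2 : (omul x (omul (oconj v) x)).2 = ((2 * oinner x v) • x - (oinner x x) • v).2 := by
    apply Quaternion.ext <;>
    · simp only [oinner_expand, omul, oconj, Prod.fst_sub, Prod.snd_sub, Prod.smul_fst,
        Prod.smul_snd, Quaternion.re_mul, Quaternion.imI_mul, Quaternion.imJ_mul,
        Quaternion.imK_mul, Quaternion.re_sub, Quaternion.imI_sub, Quaternion.imJ_sub,
        Quaternion.imK_sub, Quaternion.re_add, Quaternion.imI_add, Quaternion.imJ_add,
        Quaternion.imK_add, Quaternion.re_star, Quaternion.imI_star, Quaternion.imJ_star,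
        Quaternion.imK_star, Quaternion.re_neg, Quaternion.imI_neg, Quaternion.imJ_neg,
        Quaternion.imK_neg, Quaternion.re_smul, Quaternion.imI_smul, Quaternion.imJ_smul,
        Quaternion.imK_smul, smul_eq_mul]
      ring
  exact Prod.ext h1 h2

lemma oinner_smul_left (r : ℝ) (p q : Octonion) : oinner (r • p) q = r * oinner p q := by
  simp only [oinner_expand, Prod.smul_fst, Prod.smul_snd, Quaternion.re_smul,
    Quaternion.imI_smul, Quaternion.imJ_smul, Quaternion.imK_smul, smul_eq_mul]; ring

lemma oinner_smul_right (r : ℝ) (p q : Octonion) : oinner p (r • q) = r * oinner p q := by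
  simp only [oinner_expand, Prod.smul_fst, Prod.smul_snd, Quaternion.re_smul,
    Quaternion.imI_smul, Quaternion.imJ_smul, Quaternion.imK_smul, smul_eq_mul]; ring

lemma oinner_sub_sub (a b c d : Octonion) :
    oinner (a - b) (c - d) = oinner a c - oinner a d - oinner b c + oinner b d := by
  simp only [oinner_expand, Prod.fst_sub, Prod.snd_sub, Quaternion.re_sub,
    Quaternion.imI_sub, Quaternion.imJ_sub, Quaternion.imK_sub]; ring

lemma oinner_comm (p q : Octonion) : oinner p q = oinner q p := by
  simp only [oinner_expand]; ring

lemma oinner_oconj (p q : Octonion) : oinner (oconj p) (oconj q) = oinner p q := by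
  simp only [oinner_expand, oconj, Quaternion.re_star, Quaternion.imI_star,
    Quaternion.imJ_star, Quaternion.imK_star, Prod.fst, Prod.snd, Quaternion.re_neg,
    Quaternion.imI_neg, Quaternion.imJ_neg, Quaternion.imK_neg]; ring


/-- for orthonormal `u, v, w`, the Cayley form satisfies
`Ψ(u, v, w, u×v×w) = 1`, i.e. the span of `u, v, w, u×v×w` is a Cayley 4-plane
calibrated by `Ψ`. -/
theorem cayley_calibrates_cayley_frame (u v w : Octonion)
    (hu : oinner u u = 1) (hv : oinner v v = 1) (hw : oinner w w = 1)
    (huv : oinner u v = 0) (huw : oinner u w = 0) (hvw : oinner v w = 0) :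
    cayleyΨ u v w (tcross u v w) = 1 := by
  set a := omul u (omul (oconj v) w) with ha
  set b := omul w (omul (oconj v) u) with hb
  have hvw' : oinner (omul (oconj v) w) (omul (oconj v) w) = 1 := by
    have := oinner_polar (oconj v) w (oconj v) w
    have h2 : oinner (oconj v) (oconj v) = 1 := by rw [oinner_oconj]; exact hv
    nlinarith [this]
  have hvu' : oinner (omul (oconj v) u) (omul (oconj v) u) = 1 := by
    have := oinner_polar (oconj v) u (oconj v) u
    have h2 : oinner (oconj v) (oconj v) = 1 := by rw [oinner_oconj]; exact hv
    nlinarith [this]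
  have haa : oinner a a = 1 := by
    have := oinner_polar u (omul (oconj v) w) u (omul (oconj v) w)
    rw [← ha] at this; nlinarith [this]
  have hbb : oinner b b = 1 := by
    have := oinner_polar w (omul (oconj v) u) w (omul (oconj v) u)
    rw [← hb] at this; nlinarith [this]
  have hsu : omul u (omul (oconj v) u) = (2 * oinner u v) • u - (oinner u u) • v :=
    omul_sandwich u v
  have hsw : omul w (omul (oconj v) w) = (2 * oinner w v) • w - (oinner w w) • v :=
    omul_sandwich w v
  have hab : oinner a b = -1 := by
    have hp := oinner_polar u (omul (oconj v) w) w (omul (oconj v) u)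
    rw [← ha, ← hb, hsu, hsw] at hp
    rw [oinner_sub_sub, oinner_smul_left, oinner_smul_left, oinner_smul_left,
      oinner_smul_left, oinner_smul_right, oinner_smul_right, oinner_smul_right,
      oinner_smul_right] at hp
    have hwv : oinner w v = 0 := by rw [oinner_comm]; exact hvw
    rw [hu, hv, hw, huv, huw, hwv] at hp
    have hvw2 : oinner v w = 0 := hvw
    nlinarith [hp, oinner_comm u w, oinner_comm v w]
  have hba : oinner b a = -1 := by rw [oinner_comm]; exact hab
  have : cayleyΨ u v w (tcross u v w)
      = (2:ℝ)⁻¹ * ((2:ℝ)⁻¹ * oinner (a - b) (a - b)) := by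
    rw [cayleyΨ, tcross, ← ha, ← hb, oinner_smul_left, oinner_smul_right]
  rw [this, oinner_sub_sub, haa, hab, hba, hbb]
  norm_num
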